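/- The Petersen graph is not apex: for every vertex v, the graph obtained by deleting v is nonplanar. -/

import Mathlib

open SimpleGraph

/-- `H` is a minor of `G`: disjoint connected branch sets in `G`, one for each vertex of `H`,
with edges of `H` realized by edges of `G` between the corresponding branch sets. -/
def MinorOf {W V : Type*} (H : SimpleGraph W) (G : SimpleGraph V) : Prop :=
  ∃ f : W → Set V,
    (∀ w, (G.induce (f w)).Connected) ∧
    (Pairwise fun w w' => Disjoint (f w) (f w')) ∧
    (∀ w w', H.Adj w w' → ∃ a ∈ f w, ∃ b ∈ f w', G.Adj a b)

/-- Planarity, via Wagner's theorem: no `K₅` minor and no `K₃,₃` minor. -/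
def IsPlanar {V : Type*} (G : SimpleGraph V) : Prop :=
  ¬ MinorOf (completeGraph (Fin 5)) G ∧
  ¬ MinorOf (completeBipartiteGraph (Fin 3) (Fin 3)) G

/-- `M` is a maximal planar subgraph of `G`: `M` is planar, and inserting any edge of `G`
not in `M` into `M` yields a nonplanar graph. -/
def MaximalPlanarSubgraph {V : Type*} (G : SimpleGraph V) (M : G.Subgraph) : Prop :=
  IsPlanar M.coe ∧
  ∀ ⦃u v : V⦄ (h : G.Adj u v), ¬ M.Adj u v →
    ¬ IsPlanar (M ⊔ G.subgraphOfAdj h).coe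

/-- `G` contains a copy of `H` as a subgraph. -/
def ContainsSubgraph {W V : Type*} (H : SimpleGraph W) (G : SimpleGraph V) : Prop :=
  ∃ f : W → V, Function.Injective f ∧ ∀ a b, H.Adj a b → G.Adj (f a) (f b)


/-- The Petersen graph: vertices are 2-element subsets of a 5-element set,
adjacent iff disjoint. -/
def Petersen : SimpleGraph {s : Finset (Fin 5) // s.card = 2} where
  Adj a b := Disjoint a.1 b.1
  symm := ⟨fun _ _ h => h.symm⟩
  loopless := by
    constructor
    intro a h
    have h1 : a.1 = ∅ := by simpa using disjoint_self.mp h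
    have h2 := a.2
    rw [h1] at h2
    simp at h2



section PetersenAux

open Function Equiv

lemma induce_connected_pair {V : Type*} {G : SimpleGraph V} {p q : V} (h : G.Adj p q) :
    (G.induce ({p, q} : Set V)).Connected := by
  rw [connected_iff_exists_forall_reachable]
  refine ⟨⟨p, by simp⟩, ?_⟩
  rintro ⟨x, hx⟩
  rcases (by simpa using hx : x = p ∨ x = q) with rfl | rfl
  · exact Reachable.refl _
  · exact Adj.reachable (by simpa using h)

lemma induce_connected_singleton {V : Type*} {G : SimpleGraph V} (p : V) :
    (G.induce ({p} : Set V)).Connected := by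
  rw [connected_iff_exists_forall_reachable]
  refine ⟨⟨p, rfl⟩, ?_⟩
  rintro ⟨x, hx⟩
  cases hx
  exact Reachable.refl _

lemma MinorOf_of_iso {W V V' : Type*} {H : SimpleGraph W} {G : SimpleGraph V}
    {G' : SimpleGraph V'} (e : G ≃g G') (h : MinorOf H G) : MinorOf H G' := by
  obtain ⟨f, hconn, hdisj, hadj⟩ := h
  refine ⟨fun w => e '' f w, ?_, ?_, ?_⟩
  · intro w
    have iso : G.induce (f w) ≃g G'.induce ((e : V → V') '' f w) :=
      { toEquiv := Equiv.Set.image (e : V → V') (f w) e.toEquiv.injective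
        map_rel_iff' := by
          rintro ⟨a, ha⟩ ⟨b, hb⟩
          exact e.map_adj_iff }
    exact iso.connected_iff.mp (hconn w)
  · intro w w' hww
    exact (Set.disjoint_image_iff e.toEquiv.injective).mpr (hdisj hww)
  · intro w w' hww
    obtain ⟨a, ha, b, hb, hab⟩ := hadj w w' hww
    exact ⟨e a, Set.mem_image_of_mem _ ha, e b, Set.mem_image_of_mem _ hb, e.map_adj_iff.mpr hab⟩

abbrev PV := {s : Finset (Fin 5) // s.card = 2}

/-- The automorphism of the Petersen graph induced by a permutation of `Fin 5`. -/
def permIso (σ : Equiv.Perm (Fin 5)) : Petersen ≃g Petersen where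
  toEquiv := Equiv.subtypeEquiv σ.finsetCongr (fun s => by simp)
  map_rel_iff' := by
    rintro ⟨s, hs⟩ ⟨t, ht⟩
    show Disjoint (α := Finset (Fin 5)) _ _ ↔ Disjoint s t
    simp [Equiv.finsetCongr_apply, Finset.disjoint_map]

/-- An automorphism carrying `v` to `v'` induces an isomorphism of vertex-deleted graphs. -/
def induceIso {v v' : PV} (φ : Petersen ≃g Petersen) (hv : φ v = v') :
    (Petersen.induce ({v}ᶜ : Set PV)) ≃g (Petersen.induce ({v'}ᶜ : Set PV)) where
  toEquiv := Equiv.subtypeEquiv φ.toEquiv (fun x => by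
    subst hv
    simp only [Set.mem_compl_iff, Set.mem_singleton_iff]
    exact not_congr (EmbeddingLike.apply_eq_iff_eq φ.toEquiv).symm)
  map_rel_iff' := by
    rintro ⟨a, ha⟩ ⟨b, hb⟩
    exact φ.map_adj_iff

def pv0 : PV := ⟨{0,1}, by decide⟩

abbrev pT : Set PV := {pv0}ᶜ

instance : DecidablePred (· ∈ pT) := fun x => inferInstanceAs (Decidable ¬(x = pv0))

instance : Fintype ↥pT := Subtype.fintype _

instance : DecidableRel (Petersen.induce pT).Adj := fun a b =>
  decidable_of_iff (Disjoint a.1.1 b.1.1) Iff.rfl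

def pel (s : Finset (Fin 5)) (h2 : s.card = 2) (hne : s ≠ {0,1}) : ↥pT :=
  ⟨⟨s, h2⟩, fun h => hne (congrArg Subtype.val h)⟩

/-- Branch sets of a `K₃,₃` minor in the Petersen graph minus the vertex `{0,1}`. -/
def pf : Fin 3 ⊕ Fin 3 → Set ↥pT
  | .inl 0 => {pel {0,2} (by decide) (by decide), pel {3,4} (by decide) (by decide)}
  | .inl 1 => {pel {0,3} (by decide) (by decide), pel {2,4} (by decide) (by decide)}
  | .inl 2 => {pel {0,4} (by decide) (by decide), pel {2,3} (by decide) (by decide)}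
  | .inr 0 => {pel {1,2} (by decide) (by decide)}
  | .inr 1 => {pel {1,3} (by decide) (by decide)}
  | .inr 2 => {pel {1,4} (by decide) (by decide)}

instance instpf : ∀ w, DecidablePred (· ∈ pf w)
  | .inl 0 => fun a => inferInstanceAs (Decidable (a = _ ∨ a = _))
  | .inl 1 => fun a => inferInstanceAs (Decidable (a = _ ∨ a = _))
  | .inl 2 => fun a => inferInstanceAs (Decidable (a = _ ∨ a = _))
  | .inr 0 => fun a => inferInstanceAs (Decidable (a = _))
  | .inr 1 => fun a => inferInstanceAs (Decidable (a = _))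
  | .inr 2 => fun a => inferInstanceAs (Decidable (a = _))

lemma pf_disj : Pairwise fun w w' => Disjoint (pf w) (pf w') := by
  intro w w' hne
  rw [Set.disjoint_left]
  revert hne
  revert w w'
  decide

lemma pf_edge_aux : ∀ i j : Fin 3,
    ∃ a ∈ pf (.inl i), ∃ b ∈ pf (.inr j), (Petersen.induce pT).Adj a b := by
  decide

lemma pf_edge : ∀ w w', (completeBipartiteGraph (Fin 3) (Fin 3)).Adj w w' →
    ∃ a ∈ pf w, ∃ b ∈ pf w', (Petersen.induce pT).Adj a b := by
  rintro (i|i) (j|j) h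
  · simp at h
  · exact pf_edge_aux i j
  · obtain ⟨a, ha, b, hb, hab⟩ := pf_edge_aux j i
    exact ⟨b, hb, a, ha, hab.symm⟩
  · simp at h

lemma pf_conn : ∀ w, ((Petersen.induce pT).induce (pf w)).Connected := by
  rintro (i|i) <;> fin_cases i
  · exact induce_connected_pair (by decide)
  · exact induce_connected_pair (by decide)
  · exact induce_connected_pair (by decide)
  · exact induce_connected_singleton _
  · exact induce_connected_singleton _
  · exact induce_connected_singleton _

lemma base_minor :
    MinorOf (completeBipartiteGraph (Fin 3) (Fin 3)) (Petersen.induce pT) :=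
  ⟨pf, pf_conn, pf_disj, pf_edge⟩

end PetersenAux

/-- The Petersen graph is not apex: deleting any single vertex leaves a nonplanar graph. -/
theorem petersen_not_apex (v : {s : Finset (Fin 5) // s.card = 2}) :
    ¬ IsPlanar (Petersen.induce ({v}ᶜ : Set {s : Finset (Fin 5) // s.card = 2})) := by
  intro hpl
  apply hpl.2
  obtain ⟨a, b, hab, hv⟩ := Finset.card_eq_two.mp v.2
  set τ : Equiv.Perm (Fin 5) := Equiv.swap 0 a with hτ
  have hb' : τ.symm b ≠ 0 := by
    intro h
    have hba : b = a := by
      rw [← Equiv.apply_symm_apply τ b, h, hτ]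
      simp
    exact hab hba.symm
  set σ : Equiv.Perm (Fin 5) := (Equiv.swap 1 (τ.symm b)).trans τ with hσ
  have h0 : σ 0 = a := by
    rw [hσ]
    simp only [Equiv.trans_apply]
    rw [Equiv.swap_apply_of_ne_of_ne (by decide) (Ne.symm hb'), hτ]
    simp
  have h1 : σ 1 = b := by
    rw [hσ]
    simp only [Equiv.trans_apply]
    rw [Equiv.swap_apply_left]
    simp
  have hφ : (permIso σ) pv0 = v := by
    apply Subtype.ext
    show (Equiv.finsetCongr σ) ({0,1} : Finset (Fin 5)) = v.1
    rw [hv]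
    simp only [Equiv.finsetCongr_apply, Finset.map_insert, Finset.map_singleton,
      Equiv.coe_toEmbedding]
    rw [h0, h1]
  exact MinorOf_of_iso (induceIso (permIso σ) hφ) base_minor
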